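/- Let c ≥ 2, ñ ≥ 3, n = cñ, and let W̄_{P^u} be the uniform-gossiping matrix of the c-barbell graph. Then: (a) for every bridge edge (i*, j*), [W̄_{P^u}]_{i*j*} = 1/(cñ²); (b) for every edge (i*, j) within a block with deg(i*) = ñ and deg(j) = ñ−1, [W̄_{P^u}]_{i*j} = (2ñ−1)/(2cñ²(ñ−1)); (c) for every edge (i,j) within a block with deg(i) = deg(j) = ñ−1, [W̄_{P^u}]_{ij} = 1/(cñ(ñ−1)). Moreover, for the effective-resistance gossiping matrix W̄_{P^r}: [W̄_{P^r}]_{ij} = 1/(2(cñ−1)) for every bridge edge (i,j) and [W̄_{P^r}]_{ij} = 1/(ñ(cñ−1)) for every edge (i,j) within a block. -/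

import Mathlib

open Matrix BigOperators Finset

/-- The `c`-barbell graph on `c*tn` vertices (0-indexed): for each `k = 0,…,c−1` the block
`B_k = {k*tn,…,(k+1)*tn−1}` induces a complete graph (two vertices are in the same block iff
their values have the same quotient by `tn`), and for each `k = 1,…,c−1` there is a bridge edge
between vertex `k*tn − 1` and vertex `k*tn` (i.e. between consecutive vertices `i, i+1` with
`(i+1) % tn = 0`). -/
def cBarbell (c tn : ℕ) : SimpleGraph (Fin (c * tn)) where
  Adj i j := i ≠ j ∧ (i.val / tn = j.val / tn ∨
    (j.val = i.val + 1 ∧ (i.val + 1) % tn = 0) ∨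
    (i.val = j.val + 1 ∧ (j.val + 1) % tn = 0))
  symm := by
    constructor
    rintro i j ⟨hne, h⟩
    refine ⟨hne.symm, ?_⟩
    rcases h with h | h | h
    · exact Or.inl h.symm
    · exact Or.inr (Or.inr h)
    · exact Or.inr (Or.inl h)
  loopless := by constructor; rintro i ⟨hne, -⟩; exact hne rfl

instance (c tn : ℕ) : DecidableRel (cBarbell c tn).Adj := fun i j =>
  inferInstanceAs (Decidable (i ≠ j ∧ (i.val / tn = j.val / tn ∨
    (j.val = i.val + 1 ∧ (i.val + 1) % tn = 0) ∨
    (i.val = j.val + 1 ∧ (j.val + 1) % tn = 0))))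

/-- The uniform edge-activation probability matrix: `P^u_{ij} = 1/(n d_i)` on edges, `0` else. -/
noncomputable def probUnif {n : ℕ} (G : SimpleGraph (Fin n)) [DecidableRel G.Adj] :
    Matrix (Fin n) (Fin n) ℝ :=
  Matrix.of fun i j => if G.Adj i j then 1 / ((n : ℝ) * (G.degree i : ℝ)) else 0

/-- The uniform-gossiping matrix `W̄_{P^u} = I − D^u/2 + (P^u + (P^u)ᵀ)/2`, where
`D^u_{ii} = Σ_j (P^u_{ij} + P^u_{ji})`. -/
noncomputable def gossipUnif {n : ℕ} (G : SimpleGraph (Fin n)) [DecidableRel G.Adj] :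
    Matrix (Fin n) (Fin n) ℝ :=
  (1 : Matrix (Fin n) (Fin n) ℝ)
    - (1 / 2 : ℝ) • Matrix.diagonal (fun i => ∑ j, (probUnif G i j + probUnif G j i))
    + (1 / 2 : ℝ) • (probUnif G + (probUnif G)ᵀ)

/-- The standard basis vector `e i` of `ℝⁿ`. -/
def stdBasisVec {n : ℕ} (i : Fin n) : Fin n → ℝ := fun k => if k = i then 1 else 0


section Stmt13Aux

lemma aux_succ_div_eq {tn a : ℕ} (hd : tn ∣ (a+1)) : (a+1)/tn = a/tn + 1 := by
  rw [Nat.succ_div, if_pos hd]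

lemma aux_nat_le_iff_div_le {tn a b : ℕ} (hd : tn ∣ (b+1)) :
    a ≤ b ↔ a / tn ≤ b / tn := by
  constructor
  · exact fun h => Nat.div_le_div_right h
  · intro h
    by_contra hab
    push_neg at hab
    have h1 : (b+1)/tn ≤ a/tn := Nat.div_le_div_right hab
    have h2 : b/tn < (b+1)/tn := Nat.div_lt_div_of_lt_of_dvd hd (Nat.lt_succ_self b)
    omega

lemma aux_card_block (c tn : ℕ) (htn : 0 < tn) {q : ℕ} (hq : q < c) :
    (Finset.univ.filter fun u : Fin (c*tn) => u.val / tn = q).card = tn := by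
  have hlt : ∀ r : Fin tn, q * tn + r.val < c * tn := by
    intro r
    calc q * tn + r.val < q * tn + tn := by omega
    _ = (q+1) * tn := by ring
    _ ≤ c * tn := Nat.mul_le_mul_right tn hq
  have key : (Finset.univ.filter fun u : Fin (c*tn) => u.val / tn = q) =
      Finset.map ⟨fun r : Fin tn => ⟨q*tn + r.val, hlt r⟩, by
        intro a b hab
        simp only [Fin.mk.injEq, Fin.ext_iff] at hab ⊢
        omega⟩ Finset.univ := by
    ext u
    simp only [Finset.mem_filter, Finset.mem_map, Finset.mem_univ, true_and,
      Function.Embedding.coeFn_mk]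
    constructor
    · intro hu
      refine ⟨⟨u.val % tn, Nat.mod_lt _ htn⟩, ?_⟩
      apply Fin.ext
      show q * tn + u.val % tn = u.val
      rw [← hu]
      rw [Nat.mul_comm]; exact Nat.div_add_mod u.val tn
    · rintro ⟨r, rfl⟩
      show (q * tn + r.val) / tn = q
      rw [Nat.add_comm, Nat.add_mul_div_right _ _ htn, Nat.div_eq_of_lt r.isLt, Nat.zero_add]
  rw [key, Finset.card_map, Finset.card_univ, Fintype.card_fin]

lemma aux_lap_unique {n : ℕ} (G : SimpleGraph (Fin n)) [DecidableRel G.Adj] {i j : Fin n}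
    (hadj : G.Adj i j) {v w : Fin n → ℝ}
    (h : G.lapMatrix ℝ *ᵥ v = G.lapMatrix ℝ *ᵥ w) : v i - v j = w i - w j := by
  have h0 : Matrix.toLin' (G.lapMatrix ℝ) (v - w) = 0 := by
    rw [Matrix.toLin'_apply, Matrix.mulVec_sub, h, sub_self]
  have := (SimpleGraph.lapMatrix_mulVec_eq_zero_iff_forall_adj G (x := v - w)).mp h0 i j hadj
  simp only [Pi.sub_apply] at this
  linarith

lemma aux_gossip_offdiag {n : ℕ} (G : SimpleGraph (Fin n)) [DecidableRel G.Adj]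
    {i j : Fin n} (hne : i ≠ j) (hadj : G.Adj i j) :
    gossipUnif G i j = (1/2) * (1/((n:ℝ)*(G.degree i)) + 1/((n:ℝ)*(G.degree j))) := by
  simp only [gossipUnif, Matrix.add_apply, Matrix.sub_apply, Matrix.one_apply_ne hne,
    Matrix.smul_apply, Matrix.diagonal_apply_ne _ hne, Matrix.transpose_apply,
    probUnif, Matrix.of_apply, if_pos hadj, if_pos hadj.symm, smul_eq_mul]
  ring

lemma aux_bridge_side {c tn : ℕ} {i j k u : Fin (c*tn)} (hij : j.val = i.val + 1)
    (hmod : (i.val+1) % tn = 0) (hadj : (cBarbell c tn).Adj k u)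
    (h1 : ¬(k = i ∧ u = j)) (h2 : ¬(k = j ∧ u = i)) :
    (u.val ≤ i.val ↔ k.val ≤ i.val) := by
  obtain ⟨hne, hd⟩ := hadj
  have hdvd : tn ∣ (i.val + 1) := Nat.dvd_of_mod_eq_zero hmod
  rcases hd with h | ⟨h, hm⟩ | ⟨h, hm⟩
  · rw [aux_nat_le_iff_div_le hdvd, aux_nat_le_iff_div_le hdvd, h]
  · have hki : k.val ≠ i.val := by
      intro hk
      exact h1 ⟨Fin.ext hk, Fin.ext (by omega)⟩
    omega
  · have hui : u.val ≠ i.val := by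
      intro hu
      exact h2 ⟨Fin.ext (by omega), Fin.ext hu⟩
    omega

lemma aux_lap_bridge {c tn : ℕ} {i j : Fin (c*tn)} (hij : j.val = i.val+1)
    (hmod : (i.val+1) % tn = 0) :
    (cBarbell c tn).lapMatrix ℝ *ᵥ (fun k => if k.val ≤ i.val then (1:ℝ) else 0)
      = stdBasisVec i - stdBasisVec j := by
  set G := cBarbell c tn with hG
  have hne : i ≠ j := by intro h; rw [h] at hij; omega
  have hadj : G.Adj i j := ⟨hne, Or.inr (Or.inl ⟨hij, hmod⟩)⟩
  funext k
  rw [SimpleGraph.lapMatrix_mulVec_apply]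
  set w : Fin (c*tn) → ℝ := fun k => if k.val ≤ i.val then (1:ℝ) else 0 with hw
  have key : ∀ u ∈ G.neighborFinset k,
      w u = w k - (if k = i ∧ u = j then (1:ℝ) else if k = j ∧ u = i then -1 else 0) := by
    intro u hu
    rw [SimpleGraph.mem_neighborFinset] at hu
    by_cases hc1 : k = i ∧ u = j
    · rw [if_pos hc1, hw]
      simp only
      rw [if_neg (by rw [hc1.2, hij]; omega), if_pos (by rw [hc1.1])]
      norm_num
    · by_cases hc2 : k = j ∧ u = i
      · rw [if_neg hc1, if_pos hc2, hw]
        simp only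
        rw [if_pos (by rw [hc2.2]), if_neg (by rw [hc2.1, hij]; omega)]
        norm_num
      · rw [if_neg hc1, if_neg hc2, sub_zero, hw]
        simp only
        rw [if_congr (aux_bridge_side hij hmod hu hc1 hc2) rfl rfl]
  rw [Finset.sum_congr rfl key, Finset.sum_sub_distrib, Finset.sum_const,
    SimpleGraph.card_neighborFinset_eq_degree, nsmul_eq_mul, sub_sub_cancel]
  by_cases hk1 : k = i
  · have hkj : ¬ k = j := by rw [hk1]; exact hne
    rw [Finset.sum_congr rfl (fun u _ => show _ = (if u = j then (1:ℝ) else 0) by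
      by_cases h : u = j
      · simp [hk1, h]
      · simp [h, hkj])]
    rw [Finset.sum_ite_eq' _ j (fun _ => (1:ℝ)),
      if_pos ((SimpleGraph.mem_neighborFinset _ _ _).mpr (hk1 ▸ hadj))]
    simp [stdBasisVec, hk1, hne]
  · by_cases hk2 : k = j
    · have hki : ¬ k = i := hk1
      rw [Finset.sum_congr rfl (fun u _ => show _ = (if u = i then (-1:ℝ) else 0) by
        by_cases h : u = i
        · simp [hk2, h, hne, Ne.symm hne]
        · simp [h, hki])]
      rw [Finset.sum_ite_eq' _ i (fun _ => (-1:ℝ)),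
        if_pos ((SimpleGraph.mem_neighborFinset _ _ _).mpr (hk2 ▸ hadj.symm))]
      simp [stdBasisVec, hk2, Ne.symm hne, hk1]
    · rw [Finset.sum_eq_zero (fun u _ => by
        rw [if_neg (fun hh => hk1 hh.1), if_neg (fun hh => hk2 hh.1)])]
      simp [stdBasisVec, hk1, hk2]

noncomputable def sfun {n : ℕ} (i j : Fin n) : ℕ → ℝ :=
  fun m => if m = i.val then 1 else if m = j.val then -1 else 0

def ffun (tn q : ℕ) : ℕ → ℕ :=
  fun m => if m / tn < q then q*tn else if q < m/tn then q*tn + (tn-1) else m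

lemma ffun_block {tn q m : ℕ} (h : m / tn = q) : ffun tn q m = m := by
  unfold ffun; rw [if_neg (by omega), if_neg (by omega)]

lemma ffun_eq_of_adj {c tn : ℕ} {q : ℕ} {k u : Fin (c*tn)}
    (hadj : (cBarbell c tn).Adj k u) (hk : k.val / tn ≠ q) :
    ffun tn q k.val = ffun tn q u.val := by
  obtain ⟨hne, hd⟩ := hadj
  rcases hd with h | ⟨h, hm⟩ | ⟨h, hm⟩
  · unfold ffun
    rcases lt_or_gt_of_ne hk with hlt | hgt
    · rw [if_pos hlt, if_pos (h ▸ hlt)]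
    · rw [if_neg (Nat.lt_asymm hgt), if_pos hgt, if_neg (h ▸ Nat.lt_asymm hgt), if_pos (h ▸ hgt)]
  · have hdvd : tn ∣ (k.val+1) := Nat.dvd_of_mod_eq_zero hm
    have hsucc : (k.val+1)/tn = k.val/tn + 1 := aux_succ_div_eq hdvd
    have hu : u.val / tn = k.val/tn + 1 := by rw [h, hsucc]
    unfold ffun
    rcases lt_or_gt_of_ne hk with hlt | hgt
    · rw [if_pos hlt]
      rcases Nat.lt_or_ge (u.val/tn) q with h2 | h2
      · rw [if_pos h2]
      · have hq : u.val / tn = q := by omega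
        rw [if_neg (by omega), if_neg (by omega)]
        have h3 : tn ∣ u.val := by rw [h]; exact hdvd
        have h4 := Nat.div_mul_cancel h3
        rw [hq] at h4
        omega
    · rw [if_neg (by omega), if_pos hgt, if_neg (by omega), if_pos (by omega)]
  · have hdvd : tn ∣ (u.val+1) := Nat.dvd_of_mod_eq_zero hm
    have hsucc : (u.val+1)/tn = u.val/tn + 1 := aux_succ_div_eq hdvd
    have hku : k.val / tn = u.val/tn + 1 := by rw [h, hsucc]
    unfold ffun
    rcases lt_or_gt_of_ne hk with hlt | hgt
    · rw [if_pos hlt, if_pos (by omega)]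
    · rw [if_neg (by omega), if_pos hgt]
      rcases Nat.lt_or_ge q (u.val/tn) with h2 | h2
      · rw [if_neg (by omega), if_pos h2]
      · have hq : u.val/tn = q := by omega
        rw [if_neg (by omega), if_neg (by omega)]
        have h4 := Nat.div_mul_cancel hdvd
        rw [hsucc, hq] at h4
        have h5 : (q+1)*tn = q*tn + tn := by ring
        have htn0 : 0 < tn := Nat.pos_of_dvd_of_pos hdvd (Nat.succ_pos _)
        omega

lemma aux_lap_block {c tn : ℕ} (htn : 3 ≤ tn) {i j : Fin (c*tn)}
    (hadj : (cBarbell c tn).Adj i j) (hq : i.val/tn = j.val/tn) :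
    (cBarbell c tn).lapMatrix ℝ *ᵥ (fun k => sfun i j (ffun tn (i.val/tn) k.val) / tn)
      = stdBasisVec i - stdBasisVec j := by
  set G := cBarbell c tn with hG
  set q := i.val / tn with hqdef
  have htn0 : 0 < tn := by omega
  have htnR : (tn:ℝ) ≠ 0 := by positivity
  have hne : i ≠ j := hadj.ne
  have hvalne : i.val ≠ j.val := fun h => hne (Fin.ext h)
  have hqc : q < c := by
    rw [hqdef]
    exact (Nat.div_lt_iff_lt_mul htn0).mpr i.isLt
  have hjq : j.val / tn = q := hq.symm
  set B := (Finset.univ.filter fun u : Fin (c*tn) => u.val / tn = q) with hB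
  have hiB : i ∈ B := by simp [hB, hqdef]
  have hjB : j ∈ B := by simp [hB, hjq]
  have hcard : B.card = tn := aux_card_block c tn htn0 hqc
  have hsB : ∑ u ∈ B, sfun i j u.val = 0 := by
    have hps : ∀ u : Fin (c*tn), sfun i j u.val
        = (if u = i then (1:ℝ) else 0) + (if u = j then (-1:ℝ) else 0) := by
      intro u; unfold sfun
      by_cases h1 : u = i
      · rw [if_pos (by rw [h1]), if_pos h1, if_neg (fun hh => hne (h1 ▸ hh))]; ring
      · by_cases h2 : u = j
        · rw [if_neg (fun hh => h1 (Fin.ext hh)), if_pos h2, if_pos (by rw [h2]), if_neg h1]; ring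
        · rw [if_neg (fun hh => h1 (Fin.ext hh)), if_neg (fun hh => h2 (Fin.ext hh)),
            if_neg h1, if_neg h2]; ring
    rw [Finset.sum_congr rfl (fun u _ => hps u), Finset.sum_add_distrib,
      Finset.sum_ite_eq' B i, Finset.sum_ite_eq' B j, if_pos hiB, if_pos hjB]
    ring
  set w : Fin (c*tn) → ℝ := fun k => sfun i j (ffun tn q k.val) / tn with hw
  funext k
  rw [SimpleGraph.lapMatrix_mulVec_apply]
  by_cases hk : k.val / tn = q
  · have hkB : k ∈ B := by simp [hB, hk]
    have hfk : ffun tn q k.val = k.val := ffun_block hk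
    have key : ∀ u ∈ G.neighborFinset k,
        w u = w k + (if u.val / tn = q then (sfun i j u.val - sfun i j k.val)/tn else 0) := by
      intro u hu
      rw [SimpleGraph.mem_neighborFinset] at hu
      by_cases hub : u.val / tn = q
      · rw [if_pos hub, hw]; simp only
        rw [ffun_block hub, hfk]; ring
      · rw [if_neg hub, add_zero, hw]; simp only
        rw [ffun_eq_of_adj hu.symm hub]
    have hNB : (G.neighborFinset k).filter (fun u => u.val / tn = q) = B.erase k := by
      ext u
      simp only [Finset.mem_filter, Finset.mem_erase, SimpleGraph.mem_neighborFinset, hB,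
        Finset.mem_univ, true_and]
      constructor
      · rintro ⟨ha, hb⟩; exact ⟨ha.ne', hb⟩
      · rintro ⟨hne', hb⟩
        exact ⟨⟨Ne.symm hne', Or.inl (hk.trans hb.symm)⟩, hb⟩
    have herase : ∑ u ∈ B.erase k, (sfun i j u.val - sfun i j k.val)/tn
        = - sfun i j k.val := by
      rw [← Finset.sum_div]
      have h2 := Finset.add_sum_erase B (fun u => sfun i j u.val - sfun i j k.val) hkB
      have h3 : ∑ u ∈ B, (sfun i j u.val - sfun i j k.val)
          = - (tn * sfun i j k.val) := by
        rw [Finset.sum_sub_distrib, Finset.sum_const, nsmul_eq_mul, hsB, hcard]; ring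
      have h4 : ∑ u ∈ B.erase k, (sfun i j u.val - sfun i j k.val)
          = - (tn * sfun i j k.val) := by
        rw [← h3, ← h2]; ring
      rw [h4]
      field_simp
    have hsum : ∑ u ∈ G.neighborFinset k, w u = G.degree k * w k - sfun i j k.val := by
      rw [Finset.sum_congr rfl key, Finset.sum_add_distrib, Finset.sum_const,
        SimpleGraph.card_neighborFinset_eq_degree, nsmul_eq_mul, ← Finset.sum_filter,
        hNB, herase]
      ring
    rw [hsum, sub_sub_cancel]
    unfold sfun stdBasisVec
    simp only [Pi.sub_apply]
    by_cases hk1 : k = i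
    · rw [if_pos (by rw [hk1]), if_pos hk1, if_neg (fun hh => hne (hk1 ▸ hh))]; ring
    · by_cases hk2 : k = j
      · rw [if_neg (fun hh => hk1 (Fin.ext hh)), if_pos (by rw [hk2]), if_neg hk1, if_pos hk2]
        ring
      · rw [if_neg (fun hh => hk1 (Fin.ext hh)), if_neg (fun hh => hk2 (Fin.ext hh)),
          if_neg hk1, if_neg hk2]; ring
  · have key : ∀ u ∈ G.neighborFinset k, w u = w k := by
      intro u hu
      rw [SimpleGraph.mem_neighborFinset] at hu
      rw [hw]; simp only
      rw [ffun_eq_of_adj hu hk]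
    rw [Finset.sum_congr rfl key, Finset.sum_const,
      SimpleGraph.card_neighborFinset_eq_degree, nsmul_eq_mul]
    have hki : k ≠ i := fun hh => hk (by rw [hh])
    have hkj : k ≠ j := fun hh => hk (by rw [hh]; exact hjq)
    unfold stdBasisVec
    simp only [Pi.sub_apply, if_neg hki, if_neg hkj]
    ring

lemma aux_w_block_val {c tn : ℕ} {i j : Fin (c*tn)}
    (hadj : (cBarbell c tn).Adj i j) (hq : i.val/tn = j.val/tn) :
    sfun i j (ffun tn (i.val/tn) i.val) / (tn:ℝ) - sfun i j (ffun tn (i.val/tn) j.val) / (tn:ℝ)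
      = 2 / tn := by
  have hvalne : i.val ≠ j.val := fun h => hadj.ne (Fin.ext h)
  rw [ffun_block rfl, ffun_block hq.symm]
  unfold sfun
  rw [if_pos rfl, if_neg (Ne.symm hvalne), if_pos rfl]
  ring

lemma aux_deg_bridge_left {c tn : ℕ} (htn : 3 ≤ tn) {i j : Fin (c*tn)}
    (hij : j.val = i.val + 1) (hmod : (i.val+1) % tn = 0) :
    (cBarbell c tn).degree i = tn := by
  have htn0 : 0 < tn := by omega
  have hdvd : tn ∣ (i.val + 1) := Nat.dvd_of_mod_eq_zero hmod
  have himod : ¬ tn ∣ i.val := by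
    intro h2
    have h3 : tn ∣ 1 := by
      have := Nat.dvd_sub hdvd h2
      simpa using this
    have := Nat.le_of_dvd one_pos h3
    omega
  set q := i.val / tn with hq
  have hvalne : i.val ≠ j.val := by omega
  set B := (Finset.univ.filter fun u : Fin (c*tn) => u.val / tn = q) with hB
  have hqc : q < c := (Nat.div_lt_iff_lt_mul htn0).mpr i.isLt
  have hjq : j.val / tn = q + 1 := by rw [hij, aux_succ_div_eq hdvd]
  have hN : (cBarbell c tn).neighborFinset i = insert j (B.erase i) := by
    ext u
    rw [SimpleGraph.mem_neighborFinset, Finset.mem_insert, Finset.mem_erase]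
    simp only [hB, Finset.mem_filter, Finset.mem_univ, true_and]
    constructor
    · rintro ⟨hne, h | ⟨h, hm⟩ | ⟨h, hm⟩⟩
      · exact Or.inr ⟨Ne.symm hne, h.symm⟩
      · exact Or.inl (Fin.ext (h.trans hij.symm))
      · exact absurd (Nat.dvd_of_mod_eq_zero (h ▸ hm)) himod
    · rintro (rfl | ⟨hne, hu⟩)
      · exact ⟨fun hh => hvalne (congrArg Fin.val hh), Or.inr (Or.inl ⟨hij, hmod⟩)⟩
      · exact ⟨fun hh => hne hh.symm, Or.inl hu.symm⟩
  have hiB : i ∈ B := by simp [hB, hq]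
  have hjno : j ∉ B.erase i := by
    intro hh
    have := (Finset.mem_erase.mp hh).2
    simp only [hB, Finset.mem_filter, Finset.mem_univ, true_and] at this
    omega
  rw [SimpleGraph.degree, hN, Finset.card_insert_of_notMem hjno,
    Finset.card_erase_of_mem hiB, aux_card_block c tn htn0 hqc]
  omega

lemma aux_deg_bridge_right {c tn : ℕ} (htn : 3 ≤ tn) {i j : Fin (c*tn)}
    (hij : j.val = i.val + 1) (hmod : (i.val+1) % tn = 0) :
    (cBarbell c tn).degree j = tn := by
  have htn0 : 0 < tn := by omega
  have hdvd : tn ∣ (i.val + 1) := Nat.dvd_of_mod_eq_zero hmod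
  have hjdvd : tn ∣ j.val := hij ▸ hdvd
  have hnd : ¬ tn ∣ (j.val + 1) := by
    intro h2
    have h3 : tn ∣ 1 := by
      have := Nat.dvd_sub h2 hjdvd
      simpa using this
    have := Nat.le_of_dvd one_pos h3
    omega
  set q := j.val / tn with hq
  have hvalne : i.val ≠ j.val := by omega
  set B := (Finset.univ.filter fun u : Fin (c*tn) => u.val / tn = q) with hB
  have hqc : q < c := (Nat.div_lt_iff_lt_mul htn0).mpr j.isLt
  have hiq : i.val / tn + 1 = q := by rw [hq, hij, aux_succ_div_eq hdvd]
  have hN : (cBarbell c tn).neighborFinset j = insert i (B.erase j) := by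
    ext u
    rw [SimpleGraph.mem_neighborFinset, Finset.mem_insert, Finset.mem_erase]
    simp only [hB, Finset.mem_filter, Finset.mem_univ, true_and]
    constructor
    · rintro ⟨hne, h | ⟨h, hm⟩ | ⟨h, hm⟩⟩
      · exact Or.inr ⟨Ne.symm hne, h.symm⟩
      · exact absurd (Nat.dvd_of_mod_eq_zero hm) hnd
      · exact Or.inl (Fin.ext (by omega))
    · rintro (rfl | ⟨hne, hu⟩)
      · exact ⟨fun hh => hvalne (congrArg Fin.val hh).symm, Or.inr (Or.inr ⟨hij, hmod⟩)⟩
      · exact ⟨fun hh => hne hh.symm, Or.inl hu.symm⟩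
  have hjB : j ∈ B := by simp [hB, hq]
  have hino : i ∉ B.erase j := by
    intro hh
    have := (Finset.mem_erase.mp hh).2
    simp only [hB, Finset.mem_filter, Finset.mem_univ, true_and] at this
    omega
  rw [SimpleGraph.degree, hN, Finset.card_insert_of_notMem hino,
    Finset.card_erase_of_mem hjB, aux_card_block c tn htn0 hqc]
  omega

end Stmt13Aux

/-- Entries of the uniform-gossiping and effective-resistance gossiping matrices of the
`c`-barbell graph on the edges of the graph. -/
theorem stmt13 (c tn : ℕ) (hc : 2 ≤ c) (htn : 3 ≤ tn)
    -- the effective resistances, characterized via the Laplacian: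
    (R : Fin (c * tn) → Fin (c * tn) → ℝ)
    (hR : ∀ i j, (cBarbell c tn).Adj i j →
      ∃ v : Fin (c * tn) → ℝ,
        (cBarbell c tn).lapMatrix ℝ *ᵥ v = stdBasisVec i - stdBasisVec j ∧
        R i j = v i - v j)
    -- the effective-resistance gossiping matrix `W̄_{P^r} = I − D^r/2 + P^r`:
    (Pr Dr Wr : Matrix (Fin (c * tn)) (Fin (c * tn)) ℝ)
    (hPr : Pr = Matrix.of fun i j =>
      if (cBarbell c tn).Adj i j then R i j / (2 * ((c : ℝ) * (tn : ℝ) - 1)) else 0)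
    (hDr : Dr = Matrix.diagonal fun i =>
      (∑ j ∈ (cBarbell c tn).neighborFinset i, R i j) / ((c : ℝ) * (tn : ℝ) - 1))
    (hWr : Wr = (1 : Matrix (Fin (c * tn)) (Fin (c * tn)) ℝ) - (1 / 2 : ℝ) • Dr + Pr) :
    -- (a) bridge-edge entries of `W̄_{P^u}`
    (∀ i j : Fin (c * tn), j.val = i.val + 1 → (i.val + 1) % tn = 0 →
      gossipUnif (cBarbell c tn) i j = 1 / ((c : ℝ) * (tn : ℝ) ^ 2)) ∧
    -- (b) within-block edges incident to a bridge endpoint (degrees `tn` and `tn−1`)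
    (∀ i j : Fin (c * tn), (cBarbell c tn).Adj i j → i.val / tn = j.val / tn →
      (cBarbell c tn).degree i = tn → (cBarbell c tn).degree j = tn - 1 →
      gossipUnif (cBarbell c tn) i j =
        (2 * (tn : ℝ) - 1) / (2 * (c : ℝ) * (tn : ℝ) ^ 2 * ((tn : ℝ) - 1))) ∧
    -- (c) within-block edges between two vertices of degree `tn−1`
    (∀ i j : Fin (c * tn), (cBarbell c tn).Adj i j → i.val / tn = j.val / tn →
      (cBarbell c tn).degree i = tn - 1 → (cBarbell c tn).degree j = tn - 1 →
      gossipUnif (cBarbell c tn) i j = 1 / ((c : ℝ) * (tn : ℝ) * ((tn : ℝ) - 1))) ∧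
    -- bridge-edge entries of `W̄_{P^r}`
    (∀ i j : Fin (c * tn), j.val = i.val + 1 → (i.val + 1) % tn = 0 →
      Wr i j = 1 / (2 * ((c : ℝ) * (tn : ℝ) - 1))) ∧
    -- within-block entries of `W̄_{P^r}`
    (∀ i j : Fin (c * tn), (cBarbell c tn).Adj i j → i.val / tn = j.val / tn →
      Wr i j = 1 / ((tn : ℝ) * ((c : ℝ) * (tn : ℝ) - 1))) := by
  have htn0 : 0 < tn := by omega
  have hc0 : 0 < c := by omega
  have htnR : (tn:ℝ) ≠ 0 := by positivity
  have hcR : (c:ℝ) ≠ 0 := by positivity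
  have htn3 : (3:ℝ) ≤ (tn:ℝ) := by exact_mod_cast htn
  have hc2 : (2:ℝ) ≤ (c:ℝ) := by exact_mod_cast hc
  have htn1 : (tn:ℝ) - 1 ≠ 0 := by nlinarith
  have hX : (c:ℝ) * (tn:ℝ) - 1 ≠ 0 := by nlinarith
  have hcast : ((c * tn : ℕ) : ℝ) = (c:ℝ) * (tn:ℝ) := by push_cast; ring
  refine ⟨?_, ?_, ?_, ?_, ?_⟩
  · -- (a)
    intro i j hij hmod
    have hne : i ≠ j := by intro h; rw [h] at hij; omega
    have hadj : (cBarbell c tn).Adj i j := ⟨hne, Or.inr (Or.inl ⟨hij, hmod⟩)⟩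
    rw [aux_gossip_offdiag _ hne hadj, aux_deg_bridge_left htn hij hmod,
      aux_deg_bridge_right htn hij hmod, hcast]
    field_simp
    ring
  · -- (b)
    intro i j hadj hq hdi hdj
    have hne : i ≠ j := hadj.ne
    rw [aux_gossip_offdiag _ hne hadj, hdi, hdj, hcast,
      Nat.cast_sub (by omega : 1 ≤ tn), Nat.cast_one]
    field_simp
    ring
  · -- (c)
    intro i j hadj hq hdi hdj
    have hne : i ≠ j := hadj.ne
    rw [aux_gossip_offdiag _ hne hadj, hdi, hdj, hcast,
      Nat.cast_sub (by omega : 1 ≤ tn), Nat.cast_one]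
    field_simp
    ring
  · -- bridge entries of Wr
    intro i j hij hmod
    have hne : i ≠ j := by intro h; rw [h] at hij; omega
    have hadj : (cBarbell c tn).Adj i j := ⟨hne, Or.inr (Or.inl ⟨hij, hmod⟩)⟩
    have hRij : R i j = 1 := by
      obtain ⟨v, hv, hRv⟩ := hR i j hadj
      have hvw := aux_lap_unique (cBarbell c tn) hadj
        (hv.trans (aux_lap_bridge hij hmod).symm)
      rw [hRv, hvw]
      rw [if_pos (le_refl i.val), if_neg (by omega)]
      norm_num
    rw [hWr, Matrix.add_apply, Matrix.sub_apply, Matrix.one_apply_ne hne,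
      Matrix.smul_apply, hDr, Matrix.diagonal_apply_ne _ hne, hPr, Matrix.of_apply,
      if_pos hadj, hRij]
    norm_num
  · -- block entries of Wr
    intro i j hadj hq
    have hne : i ≠ j := hadj.ne
    have hRij : R i j = 2 / tn := by
      obtain ⟨v, hv, hRv⟩ := hR i j hadj
      have hvw := aux_lap_unique (cBarbell c tn) hadj
        (hv.trans (aux_lap_block htn hadj hq).symm)
      rw [hRv, hvw]
      exact aux_w_block_val hadj hq
    rw [hWr, Matrix.add_apply, Matrix.sub_apply, Matrix.one_apply_ne hne,
      Matrix.smul_apply, hDr, Matrix.diagonal_apply_ne _ hne, hPr, Matrix.of_apply,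
      if_pos hadj, hRij]
    field_simp
    ring
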